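/- arXiv:2603.04282 — 2 statements merged into one kernel-verified Lean document; each statement's English description precedes it below -/
import Mathlib

section
/- If m ∈ Sym_h(ℤ)∨ is not positive semidefinite, then every weakly holomorphic Jacobi form of weight k and index m vanishes identically. -/
noncomputable section
open Matrix Complex
open scoped Manifold MatrixGroups

abbrev SL2Z := Matrix.SpecialLinearGroup (Fin 2) ℤ
abbrev UHP := UpperHalfPlane

/-- `e(x) = exp(2 π i x)`. -/
def eC (x : ℂ) : ℂ := Complex.exp (2 * Real.pi * Complex.I * x)

/-- Coerce a rational matrix to a complex one. -/
def mC {h : ℕ} (m : Matrix (Fin h) (Fin h) ℚ) : Matrix (Fin h) (Fin h) ℂ :=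
  m.map fun a => (a : ℂ)

def intVec {h : ℕ} (v : Fin h → ℤ) : Fin h → ℂ := fun i => (v i : ℂ)
def ratVec {h : ℕ} (v : Fin h → ℚ) : Fin h → ℂ := fun i => (v i : ℂ)

/-- `m ∈ Sym_h(ℤ)∨`: symmetric with integral diagonal and half-integral
off-diagonal entries. -/
def IsJacobiIndex {h : ℕ} (m : Matrix (Fin h) (Fin h) ℚ) : Prop :=
  m.IsSymm ∧ (∀ i, ∃ n : ℤ, m i i = n) ∧ ∀ i j, ∃ n : ℤ, 2 * m i j = n

/-- weight-`k` index-`m` Jacobi slash action of `SL(2,ℤ)`. -/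
def jslashSL {h : ℕ} (k : ℤ) (m : Matrix (Fin h) (Fin h) ℚ)
    (φ : UHP → (Fin h → ℂ) → ℂ) (γ : SL2Z) : UHP → (Fin h → ℂ) → ℂ := fun τ z =>
  let c : ℂ := ((γ 1 0 : ℤ) : ℂ)
  let d : ℂ := ((γ 1 1 : ℤ) : ℂ)
  (c * (τ : ℂ) + d) ^ (-k) * eC (-(c * (z ⬝ᵥ mC m *ᵥ z)) * (c * (τ : ℂ) + d)⁻¹) *
    φ (γ • τ) ((c * (τ : ℂ) + d)⁻¹ • z)

/-- weight-`k` index-`m` Jacobi slash action of a (real) Heisenberg element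
`(λ, μ, κ)`. -/
def jslashH {h : ℕ} (m : Matrix (Fin h) (Fin h) ℚ) (φ : UHP → (Fin h → ℂ) → ℂ)
    (lam mu : Fin h → ℂ) (kap : Matrix (Fin h) (Fin h) ℂ) : UHP → (Fin h → ℂ) → ℂ :=
  fun τ z =>
    eC ((lam ⬝ᵥ mC m *ᵥ lam) * (τ : ℂ) + 2 * (lam ⬝ᵥ mC m *ᵥ z)
        + (mC m * (kap + vecMulVec mu lam)).trace) * φ τ (z + (τ : ℂ) • lam + mu)

/-- The block matrix `(2n, rᵀ; r, 2m)` over `ℝ`. -/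
def bigMat {h : ℕ} (m : Matrix (Fin h) (Fin h) ℚ) (n : ℤ) (r : Fin h → ℤ) :
    Matrix (Unit ⊕ Fin h) (Unit ⊕ Fin h) ℝ :=
  Matrix.fromBlocks (Matrix.of fun _ _ => (2 * n : ℝ)) (Matrix.of fun _ j => (r j : ℝ))
    (Matrix.of fun i _ => (r i : ℝ)) ((2 : ℝ) • m.map fun a => (a : ℝ))

/-- A weakly holomorphic Jacobi form of genus 1, cogenus `h`, weight `k` and
index `m`, bundled with its Fourier coefficients. -/
structure WeakJacobiForm (h : ℕ) (k : ℤ) (m : Matrix (Fin h) (Fin h) ℚ) where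
  toFun : UHP → (Fin h → ℂ) → ℂ
  holo_tau : ∀ z, MDifferentiable 𝓘(ℂ) 𝓘(ℂ) fun τ : UHP => toFun τ z
  holo_z : ∀ τ, Differentiable ℂ fun z => toFun τ z
  inv_sl : ∀ γ : SL2Z, jslashSL k m toFun γ = toFun
  inv_heis : ∀ (lam mu : Fin h → ℤ) (kap : Matrix (Fin h) (Fin h) ℤ),
    ((kap.map fun a => (a : ℚ)) +
      vecMulVec (fun i => (mu i : ℚ)) fun i => (lam i : ℚ)).IsSymm →
    jslashH m toFun (intVec lam) (intVec mu) (kap.map fun a => (a : ℂ)) = toFun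
  coeff : ℤ → (Fin h → ℤ) → ℂ
  expansion : ∀ τ z, toFun τ z =
    ∑' p : ℤ × (Fin h → ℤ), coeff p.1 p.2 * eC ((p.1 : ℂ) * (τ : ℂ) + intVec p.2 ⬝ᵥ z)
  bdd_below : ∃ n₀ : ℤ, ∀ n r, n < n₀ → coeff n r = 0

/-- The Fourier support condition singling out holomorphic Jacobi forms among
weakly holomorphic ones. -/
def WeakJacobiForm.IsHolomorphicJF {h : ℕ} {k : ℤ} {m : Matrix (Fin h) (Fin h) ℚ}
    (φ : WeakJacobiForm h k m) : Prop :=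
  ∀ n r, ¬ (bigMat m n r).PosSemidef → φ.coeff n r = 0

/-- Specialization `φ[α,β]` of a Jacobi form to the torsion point `z = ατ + β`. -/
def torsionSpec {h : ℕ} (m : Matrix (Fin h) (Fin h) ℚ) (φ : UHP → (Fin h → ℂ) → ℂ)
    (α β : Fin h → ℚ) : UHP → ℂ :=
  fun τ => jslashH m φ (ratVec α) (ratVec β) (vecMulVec (ratVec α) (ratVec β)) τ 0

/-- `OrdGE f c` formalizes that the vanishing order of `f` at `i∞` is at least
`c`: the function `f(τ) e(-cτ)` is bounded on `im τ ≥ 1`. -/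
def OrdGE (f : UHP → ℂ) (c : ℝ) : Prop :=
  ∃ C : ℝ, ∀ τ : UHP, 1 ≤ τ.im → ‖f τ * Complex.exp (-(2 * Real.pi * Complex.I * c * (τ : ℂ)))‖ ≤ C

/-- The weight-`k` slash action on functions on the upper half plane. -/
def eslash (k : ℤ) (f : UHP → ℂ) (γ : SL2Z) : UHP → ℂ := fun τ =>
  (((γ 1 0 : ℤ) : ℂ) * (τ : ℂ) + ((γ 1 1 : ℤ) : ℂ)) ^ (-k) * f (γ • τ)

section Helpers
open Set Bornology

private 
lemma keylemma (F : ℂ → ℂ) (hF : Differentiable ℂ F) (τ : ℂ) (hv : 0 < τ.im)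
    (q b : ℝ) (hq : q < 0)
    (h1 : ∀ w, F (w + 1) = F w)
    (h2 : ∀ w, ‖F (w + τ)‖ =
      ‖F w‖ * Real.exp (2 * Real.pi * (q * τ.im + b + 2 * q * w.im))) :
    ∀ w, F w = 0 := by
  set v : ℝ := τ.im with hvdef
  have hv0 : v ≠ 0 := ne_of_gt hv
  set α : ℝ := -(2 * Real.pi * q) / v with hα
  set β : ℝ := -(2 * Real.pi * b) / v with hβ
  have hαv : α * v = -(2 * Real.pi * q) := div_mul_cancel₀ _ hv0
  have hβv : β * v = -(2 * Real.pi * b) := div_mul_cancel₀ _ hv0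
  have hαpos : 0 < α := by
    apply div_pos _ hv
    nlinarith [Real.pi_pos]
  set N : ℂ → ℝ := fun w => ‖F w‖ * Real.exp (α * w.im ^ 2 + β * w.im) with hN
  have hNnonneg : ∀ w, 0 ≤ N w := fun w =>
    mul_nonneg (norm_nonneg _) (Real.exp_pos _).le
  have N1 : ∀ w, N (w + 1) = N w := by
    intro w
    simp only [hN, h1, Complex.add_im, Complex.one_im, add_zero]
  have Nτ : ∀ w, N (w + τ) = N w := by
    intro w
    simp only [hN, h2, Complex.add_im]
    rw [mul_assoc, ← Real.exp_add]
    congr 1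
    rw [Real.exp_eq_exp]
    simp only [← hvdef]
    linear_combination (2 * w.im + v) * hαv + hβv
  -- integer periodicity
  have FZ : ∀ (n : ℤ) (w : ℂ), F (w + n) = F w := by
    intro n
    induction n using Int.induction_on with
    | zero => intro w; simp
    | succ n ih =>
      intro w
      have e : (w : ℂ) + ((n : ℤ) + 1 : ℤ) = (w + ((n : ℤ) : ℂ)) + 1 := by push_cast; ring
      rw [e, h1]; exact ih w
    | pred n ih =>
      intro w
      have h' := h1 (w + ((-(n : ℤ) - 1 : ℤ) : ℂ))
      have e : (w : ℂ) + ((-(n : ℤ) - 1 : ℤ) : ℂ) + 1 = w + ((-(n : ℤ) : ℤ) : ℂ) := by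
        push_cast; ring
      rw [e] at h'
      rw [← h']; exact ih w
  have NZτ : ∀ (n : ℤ) (w : ℂ), N (w + n * τ) = N w := by
    intro n
    induction n using Int.induction_on with
    | zero => intro w; simp
    | succ n ih =>
      intro w
      have e : (w : ℂ) + (((n : ℤ) + 1 : ℤ) : ℂ) * τ = (w + ((n : ℤ) : ℂ) * τ) + τ := by
        push_cast; ring
      rw [e, Nτ]; exact ih w
    | pred n ih =>
      intro w
      have h' := Nτ (w + ((-(n : ℤ) - 1 : ℤ) : ℂ) * τ)
      have e : (w : ℂ) + ((-(n : ℤ) - 1 : ℤ) : ℂ) * τ + τ = w + ((-(n : ℤ) : ℤ) : ℂ) * τ := by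
        push_cast; ring
      rw [e] at h'
      rw [← h']; exact ih w
  -- fundamental domain
  set P : Set ℂ := {w : ℂ | w.re ∈ Icc (0:ℝ) 1 ∧ w.im ∈ Icc 0 v} with hP
  have hPcompact : IsCompact P := by
    apply Metric.isCompact_of_isClosed_isBounded
    · exact IsClosed.inter (isClosed_Icc.preimage Complex.continuous_re)
        (isClosed_Icc.preimage Complex.continuous_im)
    · apply (Metric.isBounded_closedBall (x := (0:ℂ)) (r := 1 + v)).subset
      intro w hw
      simp only [Metric.mem_closedBall, dist_zero_right]
      calc ‖w‖ ≤ |w.re| + |w.im| := Complex.norm_le_abs_re_add_abs_im w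
        _ ≤ 1 + v := by
            rcases hw with ⟨⟨h1', h2'⟩, ⟨h3', h4'⟩⟩
            rw [_root_.abs_of_nonneg h1', _root_.abs_of_nonneg h3']
            linarith
  have hNcont : Continuous N := by
    apply Continuous.mul
    · exact continuous_norm.comp hF.continuous
    · exact Real.continuous_exp.comp (by fun_prop)
  obtain ⟨C, hC⟩ : ∃ C, ∀ w ∈ P, N w ≤ C := by
    rcases P.eq_empty_or_nonempty with h | h
    · exact ⟨0, by simp [h]⟩
    · obtain ⟨x, _, hx⟩ := hPcompact.exists_isMaxOn h hNcont.continuousOn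
      exact ⟨N x, fun w hw => hx hw⟩
  -- reduce arbitrary point to P
  have hNC : ∀ w, N w ≤ C := by
    intro w
    set n : ℤ := ⌊w.im / v⌋ with hn
    set w₁ : ℂ := w - n * τ with hw₁
    have hw₁im : w₁.im = v * Int.fract (w.im / v) := by
      simp only [hw₁, Complex.sub_im, Complex.mul_im, Complex.intCast_re, Complex.intCast_im]
      rw [Int.fract]
      field_simp
      ring
    set a : ℤ := ⌊w₁.re⌋ with ha
    set w₂ : ℂ := w₁ - a with hw₂
    have hw₂mem : w₂ ∈ P := by
      constructor
      · simp only [hw₂, Complex.sub_re, Complex.intCast_re]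
        constructor
        · linarith [Int.floor_le w₁.re]
        · linarith [Int.lt_floor_add_one w₁.re]
      · simp only [hw₂, Complex.sub_im, Complex.intCast_im, sub_zero, hw₁im]
        constructor
        · exact mul_nonneg hv.le (Int.fract_nonneg _)
        · calc v * Int.fract (w.im / v) ≤ v * 1 :=
              mul_le_mul_of_nonneg_left (Int.fract_lt_one _).le hv.le
            _ = v := mul_one v
    have NZ : ∀ (a : ℤ) (w : ℂ), N (w + a) = N w := by
      intro a w
      simp only [hN, FZ a w, Complex.add_im, Complex.intCast_im, add_zero]
    have hNw : N w = N w₂ := by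
      have e1 : w = (w₂ + (a : ℂ)) + (n : ℂ) * τ := by simp only [hw₂, hw₁]; ring
      rw [e1, NZτ n (w₂ + (a : ℂ)), NZ a w₂]
    exact hNw ▸ hC w₂ hw₂mem
  -- bound F
  set D : ℝ := C * Real.exp (β ^ 2 / (4 * α)) with hD
  have hFD : ∀ w, ‖F w‖ ≤ D := by
    intro w
    have h1' := hNC w
    have h2' : Real.exp (-(α * w.im ^ 2 + β * w.im)) ≤ Real.exp (β ^ 2 / (4 * α)) := by
      apply Real.exp_le_exp.mpr
      rw [le_div_iff₀ (by positivity : (0:ℝ) < 4 * α)]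
      nlinarith [sq_nonneg (2 * α * w.im + β), hαpos]
    have h3' : ‖F w‖ = N w * Real.exp (-(α * w.im ^ 2 + β * w.im)) := by
      simp only [hN]
      rw [mul_assoc, ← Real.exp_add,
        show α * w.im ^ 2 + β * w.im + -(α * w.im ^ 2 + β * w.im) = 0 by ring,
        Real.exp_zero, mul_one]
    rw [h3']
    calc N w * Real.exp (-(α * w.im ^ 2 + β * w.im))
        ≤ C * Real.exp (β ^ 2 / (4 * α)) := by
          apply mul_le_mul h1' h2' (Real.exp_pos _).le
          exact le_trans (hNnonneg w) h1'
      _ = D := rfl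
  -- Liouville
  have hconst : ∀ w w', F w = F w' := by
    intro w w'
    apply hF.apply_eq_apply_of_bounded
    rw [isBounded_iff_forall_norm_le]
    exact ⟨D, by rintro x ⟨w, rfl⟩; exact hFD w⟩
  intro w
  have hlim : ∀ t : ℝ, ‖F w‖ ≤ C * Real.exp (-(α * t ^ 2 + β * t)) := by
    intro t
    have : F w = F (t * Complex.I) := hconst w _
    rw [this]
    have him : (↑t * Complex.I).im = t := by simp
    have h1' := hNC (t * Complex.I)
    have h3' : ‖F (t * Complex.I)‖
        = N (t * Complex.I) * Real.exp (-(α * t ^ 2 + β * t)) := by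
      simp only [hN, him]
      rw [mul_assoc, ← Real.exp_add,
        show α * t ^ 2 + β * t + -(α * t ^ 2 + β * t) = 0 by ring,
        Real.exp_zero, mul_one]
    rw [h3']
    have := hNnonneg (t * Complex.I)
    calc N (↑t * Complex.I) * Real.exp (-(α * t ^ 2 + β * t))
        ≤ C * Real.exp (-(α * t ^ 2 + β * t)) :=
          mul_le_mul_of_nonneg_right h1' (Real.exp_pos _).le
      _ = _ := rfl
  have htend : Filter.Tendsto (fun t : ℝ => C * Real.exp (-(α * t ^ 2 + β * t)))
      Filter.atTop (nhds 0) := by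
    rw [show (0:ℝ) = C * 0 by ring]
    apply Filter.Tendsto.const_mul
    apply Real.tendsto_exp_atBot.comp
    rw [Filter.tendsto_neg_atBot_iff]
    have : ∀ t : ℝ, α * t ^ 2 + β * t = t * (α * t + β) := fun t => by ring
    simp only [this]
    apply Filter.Tendsto.atTop_mul_atTop₀ Filter.tendsto_id
    exact Filter.tendsto_atTop_add_const_right _ β
      (Filter.Tendsto.const_mul_atTop hαpos Filter.tendsto_id)
  have hle0 : ‖F w‖ ≤ 0 := ge_of_tendsto htend (Filter.Eventually.of_forall hlim)
  exact norm_eq_zero.mp (le_antisymm hle0 (norm_nonneg _))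


private lemma exists_neg_vec (h : ℕ) (m : Matrix (Fin h) (Fin h) ℚ) (hsymm : m.IsSymm)
    (hnpsd : ¬ (m.map fun a => (a : ℝ)).PosSemidef) :
    ∃ s : Fin h → ℤ, ((fun i => (s i : ℚ)) ⬝ᵥ m *ᵥ fun i => (s i : ℚ)) < 0 := by
  set M : Matrix (Fin h) (Fin h) ℝ := m.map fun a => (a : ℝ) with hM
  have hherm : M.IsHermitian := by
    rw [Matrix.IsHermitian, Matrix.conjTranspose_eq_transpose_of_trivial]
    rw [← Matrix.transpose_map, hsymm.eq]
  have hex : ∃ x : Fin h → ℝ, x ⬝ᵥ M *ᵥ x < 0 := by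
    by_contra hcon
    push_neg at hcon
    exact hnpsd (Matrix.posSemidef_iff_dotProduct_mulVec.mpr ⟨hherm, fun x => by simpa [star_trivial] using hcon x⟩)
  obtain ⟨x₀, hx₀⟩ := hex
  -- the set of vectors with negative form value is open
  have hcont : Continuous fun x : Fin h → ℝ => x ⬝ᵥ M *ᵥ x := by
    simp only [dotProduct, Matrix.mulVec]
    exact continuous_finset_sum _ fun i _ => ((continuous_apply i).mul
      (continuous_finset_sum _ fun j _ => continuous_const.mul (continuous_apply j)))
  have hopen : IsOpen {x : Fin h → ℝ | x ⬝ᵥ M *ᵥ x < 0} :=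
    isOpen_lt hcont continuous_const
  -- rational points are dense
  have hdense : Dense (Set.pi Set.univ fun _ : Fin h => Set.range ((↑) : ℚ → ℝ)) :=
    dense_pi Set.univ fun _ _ => Rat.denseRange_cast
  obtain ⟨x, hxmem, hxneg⟩ := hdense.exists_mem_open hopen ⟨x₀, hx₀⟩
  choose y hy using fun i => hxmem i (Set.mem_univ i)
  have hxy : x = fun i => ((y i : ℝ)) := by funext i; rw [hy i]
  rw [hxy] at hxneg
  have hratneg : (y ⬝ᵥ m *ᵥ y) < 0 := by
    have hcast : (((y ⬝ᵥ m *ᵥ y : ℚ)) : ℝ) = (fun i => ((y i : ℝ))) ⬝ᵥ M *ᵥ fun i => ((y i : ℝ)) := by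
      simp only [dotProduct, Matrix.mulVec, hM, Matrix.map_apply]
      push_cast
      rfl
    have : (((y ⬝ᵥ m *ᵥ y : ℚ)) : ℝ) < 0 := by rw [hcast]; exact hxneg
    exact_mod_cast this
  -- clear denominators
  set N : ℕ := ∏ j, (y j).den with hNdef
  have hNpos : 0 < N := Finset.prod_pos fun j _ => (y j).pos
  refine ⟨fun i => (y i).num * (∏ j ∈ Finset.univ.erase i, ((y j).den : ℤ)), ?_⟩
  have hcoord : (fun i => (((y i).num * (∏ j ∈ Finset.univ.erase i, ((y j).den : ℤ)) : ℤ) : ℚ))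
      = fun i => (N : ℚ) * y i := by
    funext i
    have hnum : (((y i).num : ℚ)) = y i * ((y i).den : ℚ) := by
      have h2 : ((y i).den : ℚ) ≠ 0 := by
        exact_mod_cast (y i).den_nz
      have h1 := Rat.num_div_den (y i)
      rw [div_eq_iff h2] at h1
      rw [h1]
    push_cast
    rw [hnum]
    rw [show ((N : ℚ)) = ((y i).den : ℚ) * ∏ j ∈ Finset.univ.erase i, ((y j).den : ℚ) by
      push_cast [hNdef]
      rw [← Finset.mul_prod_erase Finset.univ (fun j => ((y j).den : ℚ)) (Finset.mem_univ i)]]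
    ring
  rw [hcoord]
  have : (fun i => (N : ℚ) * y i) = (N : ℚ) • y := by funext i; simp [Pi.smul_apply, smul_eq_mul]
  rw [this, smul_dotProduct, Matrix.mulVec_smul, dotProduct_smul, smul_eq_mul,
    smul_eq_mul, ← mul_assoc]
  apply mul_neg_of_pos_of_neg _ hratneg
  positivity

end Helpers

/-- If `m ∈ Sym_h(ℤ)∨` is not positive semidefinite then every weakly
holomorphic Jacobi form of weight `k` and index `m` vanishes identically. -/
theorem stmt7 (h : ℕ) (k : ℤ) (m : Matrix (Fin h) (Fin h) ℚ)
    (hm : IsJacobiIndex m)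
    (hnpsd : ¬ (m.map fun a => (a : ℝ)).PosSemidef)
    (φ : WeakJacobiForm h k m) :
    ∀ τ z, φ.toFun τ z = 0 := by
  obtain ⟨s, hs⟩ := exists_neg_vec h m hm.1 hnpsd
  intro τ z
  have hiv0 : intVec (0 : Fin h → ℤ) = (0 : Fin h → ℂ) := by
    funext i; simp [intVec]
  have hk0 : ((0 : Matrix (Fin h) (Fin h) ℤ).map fun a => (a : ℂ)) = 0 := by
    ext i j; simp
  have eC0 : eC 0 = 1 := by simp [eC]
  have hv1 : vecMulVec (intVec s) (0 : Fin h → ℂ) = 0 := by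
    ext i j; simp [Matrix.vecMulVec_apply]
  have hv2 : vecMulVec (0 : Fin h → ℂ) (intVec s) = 0 := by
    ext i j; simp [Matrix.vecMulVec_apply]
  have hQc : intVec s ⬝ᵥ mC m *ᵥ intVec s
      = ((((fun i => (s i : ℚ)) ⬝ᵥ m *ᵥ fun i => (s i : ℚ)) : ℚ) : ℂ) := by
    simp only [intVec, mC, dotProduct, Matrix.mulVec, Matrix.map_apply]
    push_cast
    rfl
  have hsymm1 : (((0 : Matrix (Fin h) (Fin h) ℤ).map fun a => (a : ℚ)) +
      vecMulVec (fun i => ((s i : ℚ))) fun i => (((0 : Fin h → ℤ) i : ℚ))).IsSymm := by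
    have e : (((0 : Matrix (Fin h) (Fin h) ℤ).map fun a => (a : ℚ)) +
        vecMulVec (fun i => ((s i : ℚ))) fun i => (((0 : Fin h → ℤ) i : ℚ))) = 0 := by
      ext i j; simp [Matrix.vecMulVec_apply]
    rw [e]
    unfold Matrix.IsSymm; simp
  have hsymm2 : (((0 : Matrix (Fin h) (Fin h) ℤ).map fun a => (a : ℚ)) +
      vecMulVec (fun i => (((0 : Fin h → ℤ) i : ℚ))) fun i => ((s i : ℚ))).IsSymm := by
    have e : (((0 : Matrix (Fin h) (Fin h) ℤ).map fun a => (a : ℚ)) +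
        vecMulVec (fun i => (((0 : Fin h → ℤ) i : ℚ))) fun i => ((s i : ℚ))) = 0 := by
      ext i j; simp [Matrix.vecMulVec_apply]
    rw [e]
    unfold Matrix.IsSymm; simp
  have heis1 := φ.inv_heis 0 s 0 hsymm1
  have heis2 := φ.inv_heis s 0 0 hsymm2
  have key1 : ∀ y : Fin h → ℂ, φ.toFun τ (y + intVec s) = φ.toFun τ y := by
    intro y
    have hthis := congrFun (congrFun heis1 τ) y
    simp only [jslashH, hiv0, hk0, hv1, zero_add, add_zero, zero_dotProduct,
      zero_mul, mul_zero, Matrix.mul_zero, Matrix.trace_zero, eC0, one_mul, smul_zero] at hthis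
    exact hthis
  have key2 : ∀ y : Fin h → ℂ,
      eC ((intVec s ⬝ᵥ mC m *ᵥ intVec s) * (τ : ℂ) + 2 * (intVec s ⬝ᵥ mC m *ᵥ y)) *
        φ.toFun τ (y + (τ : ℂ) • intVec s) = φ.toFun τ y := by
    intro y
    have hthis := congrFun (congrFun heis2 τ) y
    simp only [jslashH, hiv0, hk0, hv2, zero_add, add_zero, Matrix.mul_zero,
      Matrix.trace_zero] at hthis
    exact hthis
  -- restriction along the negative direction
  have hFdiff : Differentiable ℂ (fun w : ℂ => φ.toFun τ (z + w • intVec s)) :=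
    (φ.holo_z τ).comp ((differentiable_const z).add (differentiable_id.smul_const (intVec s)))
  have hF1 : ∀ w : ℂ, φ.toFun τ (z + (w + 1) • intVec s) = φ.toFun τ (z + w • intVec s) := by
    intro w
    have e : z + (w + 1) • intVec s = (z + w • intVec s) + intVec s := by
      rw [add_smul, one_smul, add_assoc]
    rw [e, key1]
  have hqneg : ((((fun i => (s i : ℚ)) ⬝ᵥ m *ᵥ fun i => (s i : ℚ)) : ℚ) : ℝ) < 0 := by
    exact_mod_cast hs
  have habs_eC : ∀ x : ℂ, ‖eC x‖ = Real.exp (-(2 * Real.pi * x.im)) := by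
    intro x
    rw [eC, Complex.norm_exp]
    congr 1
    simp [Complex.mul_re, Complex.mul_im]
    try ring
  set q : ℝ := ((((fun i => (s i : ℚ)) ⬝ᵥ m *ᵥ fun i => (s i : ℚ)) : ℚ) : ℝ) with hqdef
  set B : ℂ := 2 * (intVec s ⬝ᵥ mC m *ᵥ z) with hBdef
  have hF2 : ∀ w : ℂ, ‖φ.toFun τ (z + (w + (τ : ℂ)) • intVec s)‖ =
      ‖φ.toFun τ (z + w • intVec s)‖ *
        Real.exp (2 * Real.pi * (q * (τ : ℂ).im + B.im + 2 * q * w.im)) := by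
    intro w
    have hy := key2 (z + w • intVec s)
    have harg : z + w • intVec s + (τ : ℂ) • intVec s = z + (w + (τ : ℂ)) • intVec s := by
      rw [add_smul, add_assoc]
    rw [harg] at hy
    have hAval : (intVec s ⬝ᵥ mC m *ᵥ intVec s) * (τ : ℂ)
          + 2 * (intVec s ⬝ᵥ mC m *ᵥ (z + w • intVec s))
        = ((q : ℂ)) * (τ : ℂ) + B + ((q : ℂ)) * (2 * w) := by
      rw [Matrix.mulVec_add, Matrix.mulVec_smul, dotProduct_add, dotProduct_smul,
        hQc, hBdef]
      simp only [smul_eq_mul, hqdef]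
      push_cast
      ring
    rw [hAval] at hy
    have habs := congrArg (fun x : ℂ => ‖x‖) hy
    rw [norm_mul, habs_eC] at habs
    have hIm : (((q : ℂ)) * (τ : ℂ) + B + ((q : ℂ)) * (2 * w)).im
        = q * (τ : ℂ).im + B.im + 2 * q * w.im := by
      simp [Complex.add_im, Complex.mul_im, Complex.ofReal_re, Complex.ofReal_im]
      try ring
    rw [hIm] at habs
    rw [← habs]
    set E : ℝ := q * (τ : ℂ).im + B.im + 2 * q * w.im with hE
    calc ‖φ.toFun τ (z + (w + (τ : ℂ)) • intVec s)‖
        = ‖φ.toFun τ (z + (w + (τ : ℂ)) • intVec s)‖ *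
            (Real.exp (-(2 * Real.pi * E)) * Real.exp (2 * Real.pi * E)) := by
          rw [← Real.exp_add]; simp
      _ = Real.exp (-(2 * Real.pi * E)) *
            ‖φ.toFun τ (z + (w + (τ : ℂ)) • intVec s)‖ * Real.exp (2 * Real.pi * E) := by
          ring
  have hvpos : 0 < ((τ : ℂ)).im := τ.2
  have hzero := keylemma (fun w : ℂ => φ.toFun τ (z + w • intVec s)) hFdiff (τ : ℂ) hvpos
    q B.im hqneg hF1 hF2
  have h0 := hzero 0
  simpa using h0
end
end

section
/- Let φ be a weakly holomorphic Jacobi form of weight k and index m, α, β ∈ ℚ^h, and γ ∈ SL(2,ℤ). Then φ[α,β]|_k γ = e(m(αβᵀ − α'β'ᵀ)) · φ[α', β'], where (α', β') = (α, β)γ (right vector-matrix action on the pair of row vectors). -/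
noncomputable section
open Matrix Complex
open scoped Manifold MatrixGroups

lemma eC_add (x y : ℂ) : eC (x + y) = eC x * eC y := by
  simp [eC, mul_add, Complex.exp_add]

lemma eC_zero : eC 0 = 1 := by simp [eC]

lemma trace_mul_vecMulVec {h : ℕ} (M : Matrix (Fin h) (Fin h) ℂ) (u v : Fin h → ℂ) :
    (M * vecMulVec u v).trace = v ⬝ᵥ M *ᵥ u := by
  simp only [Matrix.trace, Matrix.diag_apply, Matrix.mul_apply, Matrix.vecMulVec_apply,
    dotProduct, Matrix.mulVec, Finset.mul_sum]
  exact Finset.sum_congr rfl fun i _ => Finset.sum_congr rfl fun j _ => by ring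

lemma dot_symm {h : ℕ} (M : Matrix (Fin h) (Fin h) ℂ) (hs : M.IsSymm) (x y : Fin h → ℂ) :
    x ⬝ᵥ M *ᵥ y = y ⬝ᵥ M *ᵥ x := by
  rw [Matrix.dotProduct_mulVec, ← Matrix.mulVec_transpose, hs.eq, dotProduct_comm]

lemma mC_isSymm {h : ℕ} {m : Matrix (Fin h) (Fin h) ℚ} (hs : m.IsSymm) : (mC m).IsSymm := by
  unfold Matrix.IsSymm mC
  rw [← Matrix.transpose_map, hs.eq]

/-- `φ[α,β]|_k γ = e(m(αβᵀ − α'β'ᵀ))·φ[α',β']` with `(α',β') = (α,β)γ`. -/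
theorem stmt11 (h : ℕ) (k : ℤ) (m : Matrix (Fin h) (Fin h) ℚ)
    (hm : IsJacobiIndex m) (φ : WeakJacobiForm h k m)
    (α β : Fin h → ℚ) (γ : SL2Z) :
    eslash k (torsionSpec m φ.toFun α β) γ = fun τ =>
      eC ((mC m * (vecMulVec (ratVec α) (ratVec β) -
        vecMulVec (ratVec ((γ 0 0 : ℚ) • α + (γ 1 0 : ℚ) • β))
          (ratVec ((γ 0 1 : ℚ) • α + (γ 1 1 : ℚ) • β)))).trace) *
      torsionSpec m φ.toFun ((γ 0 0 : ℚ) • α + (γ 1 0 : ℚ) • β)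
        ((γ 0 1 : ℚ) • α + (γ 1 1 : ℚ) • β) τ := by
  obtain ⟨hsym, -, -⟩ := hm
  funext τ
  simp only [eslash, torsionSpec, jslashH, Matrix.mulVec_zero, dotProduct_zero, mul_zero,
    add_zero, zero_add]
  -- notation
  set a : ℂ := ((γ 0 0 : ℤ) : ℂ) with ha
  set b : ℂ := ((γ 0 1 : ℤ) : ℂ) with hb
  set c : ℂ := ((γ 1 0 : ℤ) : ℂ) with hc
  set d : ℂ := ((γ 1 1 : ℤ) : ℂ) with hd
  set D : ℂ := c * (τ : ℂ) + d with hDdef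
  set A : Fin h → ℂ := ratVec α with hAdef
  set Bv : Fin h → ℂ := ratVec β with hBdef
  set σ : ℂ := ((γ • τ : UHP) : ℂ) with hσdef
  have hD : D ≠ 0 := by
    have := UpperHalfPlane.denom_ne_zero γ τ
    rwa [ModularGroup.denom_apply] at this
  have hdet : a * d - b * c = 1 := by
    have h2 := γ.2
    rw [Matrix.det_fin_two] at h2
    rw [ha, hb, hc, hd]
    exact_mod_cast congrArg (fun n : ℤ => (n : ℂ)) h2
  have hγτ : σ = (a * (τ : ℂ) + b) / D := by
    rw [hσdef, ModularGroup.sl_moeb, UpperHalfPlane.coe_smul]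
    simp [UpperHalfPlane.num, UpperHalfPlane.denom, ha, hb, hc, hd, hDdef, UpperHalfPlane.σ]
  have hσD : D * σ = a * (τ : ℂ) + b := by
    rw [hγτ]; field_simp
  have hQ' : Bv ⬝ᵥ mC m *ᵥ A = A ⬝ᵥ mC m *ᵥ Bv := dot_symm _ (mC_isSymm hsym) Bv A
  have hA' : ratVec ((γ 0 0 : ℚ) • α + (γ 1 0 : ℚ) • β) = a • A + c • Bv := by
    funext i
    simp only [ratVec, Pi.add_apply, Pi.smul_apply, smul_eq_mul, hAdef, hBdef, ha, hc]
    push_cast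
    ring
  have hB' : ratVec ((γ 0 1 : ℚ) • α + (γ 1 1 : ℚ) • β) = b • A + d • Bv := by
    funext i
    simp only [ratVec, Pi.add_apply, Pi.smul_apply, smul_eq_mul, hAdef, hBdef, hb, hd]
    push_cast
    ring
  -- the key transformation of φ coming from SL₂-invariance
  have key : ∀ w : Fin h → ℂ, φ.toFun (γ • τ) w
      = D ^ k * eC (c * D * (w ⬝ᵥ mC m *ᵥ w)) * φ.toFun τ (D • w) := by
    intro w
    have h1 : D ^ (-k) * eC (-(c * ((D • w) ⬝ᵥ mC m *ᵥ (D • w))) * D⁻¹) *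
        φ.toFun (γ • τ) (D⁻¹ • D • w) = φ.toFun τ (D • w) :=
      congrFun (congrFun (φ.inv_sl γ) τ) (D • w)
    rw [smul_smul, inv_mul_cancel₀ hD, one_smul] at h1
    have hquad : (D • w) ⬝ᵥ mC m *ᵥ (D • w) = D * (D * (w ⬝ᵥ mC m *ᵥ w)) := by
      simp [Matrix.mulVec_smul, smul_eq_mul]
    rw [hquad] at h1
    have harg : -(c * (D * (D * (w ⬝ᵥ mC m *ᵥ w)))) * D⁻¹ = -(c * D * (w ⬝ᵥ mC m *ᵥ w)) := by
      field_simp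
    rw [harg] at h1
    have hzk : D ^ k * D ^ (-k) = 1 := by
      rw [_root_.zpow_neg]
      exact mul_inv_cancel₀ (zpow_ne_zero k hD)
    have heC : eC (c * D * (w ⬝ᵥ mC m *ᵥ w)) * eC (-(c * D * (w ⬝ᵥ mC m *ᵥ w))) = 1 := by
      rw [← eC_add, add_neg_cancel, eC_zero]
    calc φ.toFun (γ • τ) w
        = (D ^ k * D ^ (-k)) *
          (eC (c * D * (w ⬝ᵥ mC m *ᵥ w)) * eC (-(c * D * (w ⬝ᵥ mC m *ᵥ w)))) *
          φ.toFun (γ • τ) w := by rw [hzk, heC]; ring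
      _ = D ^ k * eC (c * D * (w ⬝ᵥ mC m *ᵥ w)) *
          (D ^ (-k) * eC (-(c * D * (w ⬝ᵥ mC m *ᵥ w))) * φ.toFun (γ • τ) w) := by ring
      _ = D ^ k * eC (c * D * (w ⬝ᵥ mC m *ᵥ w)) * φ.toFun τ (D • w) := by rw [h1]
  rw [hA', hB', key (σ • A + Bv)]
  have hargeq : D • (σ • A + Bv) = (τ : ℂ) • (a • A + c • Bv) + (b • A + d • Bv) := by
    funext i
    simp only [Pi.smul_apply, Pi.add_apply, smul_eq_mul]
    linear_combination (A i) * hσD + (Bv i) * hDdef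
  rw [hargeq]
  -- expand all the quadratic forms and traces
  simp only [Matrix.mul_add, Matrix.mul_sub, Matrix.trace_add, Matrix.trace_sub,
    trace_mul_vecMulVec, Matrix.mulVec_add, Matrix.mulVec_smul, dotProduct_add,
    dotProduct_smul, add_dotProduct, smul_dotProduct, smul_eq_mul, hQ']
  set P : ℂ := A ⬝ᵥ mC m *ᵥ A with hP
  set Q : ℂ := A ⬝ᵥ mC m *ᵥ Bv with hQ
  set R : ℂ := Bv ⬝ᵥ mC m *ᵥ Bv with hR
  set Dk : ℂ := D ^ k with hDk
  set Dk' : ℂ := D ^ (-k) with hDk'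
  have hzk : Dk' * Dk = 1 := by
    rw [hDk, hDk', _root_.zpow_neg]
    exact inv_mul_cancel₀ (zpow_ne_zero k hD)
  set F : ℂ := φ.toFun τ ((τ : ℂ) • (a • A + c • Bv) + (b • A + d • Bv)) with hF
  have hE : (P * σ + (Q + Q)) + (c * D * (σ * (σ * P + Q) + (σ * Q + R)))
      = (Q - (a * (b * P + d * Q) + c * (b * Q + d * R)))
        + ((a * (a * P + c * Q) + c * (a * Q + c * R)) * (τ : ℂ) +
            (a * (b * P + d * Q) + c * (b * Q + d * R) +
              (b * (a * P + c * Q) + d * (a * Q + c * R)))) := by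
    apply mul_left_cancel₀ (pow_ne_zero 2 hD)
    rw [hDdef] at hσD ⊢
    linear_combination
      ((c * (τ : ℂ) + d) * P +
          c * (c * (τ : ℂ) + d) * P * ((c * (τ : ℂ) + d) * σ + (a * (τ : ℂ) + b)) +
          2 * c * (c * (τ : ℂ) + d) ^ 2 * Q) * hσD
        - ((c * (τ : ℂ) + d) * ((a * (τ : ℂ) + b) * P + (c * (τ : ℂ) + d) * Q)) * hdet
  have h5 : eC (P * σ + (Q + Q)) * eC (c * D * (σ * (σ * P + Q) + (σ * Q + R)))
      = eC (Q - (a * (b * P + d * Q) + c * (b * Q + d * R))) *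
        eC ((a * (a * P + c * Q) + c * (a * Q + c * R)) * (τ : ℂ) +
          (a * (b * P + d * Q) + c * (b * Q + d * R) +
            (b * (a * P + c * Q) + d * (a * Q + c * R)))) := by
    rw [← eC_add, ← eC_add, hE]
  linear_combination (Dk' * Dk * F) * h5 +
    (eC (Q - (a * (b * P + d * Q) + c * (b * Q + d * R))) *
      eC ((a * (a * P + c * Q) + c * (a * Q + c * R)) * (τ : ℂ) +
        (a * (b * P + d * Q) + c * (b * Q + d * R) +
          (b * (a * P + c * Q) + d * (a * Q + c * R)))) * F) * hzk
end
end
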